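/- arXiv:1605.07853 — 3 statements merged into one kernel-verified Lean document; each statement's English description precedes it below -/
import Mathlib

section
/- The geometric distribution maximizes Shannon entropy among all probability distributions on the nonnegative integers with a given mean λ > 0; i.e., for any random variable X on ℕ with E[X] = λ, H(X) ≤ (1+λ)log(1+λ) − λ log λ, with equality iff X is geometric with parameter λ/(1+λ). -/
/-- Pointwise Gibbs inequality: for `0 ≤ x` and `0 < y`,
`x - y ≤ x * log x - x * log y`, with equality iff `x = y`. -/
lemma gibbs_pt {x y : ℝ} (hx : 0 ≤ x) (hy : 0 < y) :
    x - y ≤ x * Real.log x - x * Real.log y ∧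
    (x * Real.log x - x * Real.log y = x - y ↔ x = y) := by
  rcases hx.eq_or_lt with h | h
  · subst h
    simp only [zero_mul, sub_zero, zero_sub, sub_self]
    constructor
    · linarith
    · constructor
      · intro h; linarith
      · intro h; exact absurd h.symm (ne_of_gt hy)
  · have hyx : 0 < y / x := div_pos hy h
    have key : Real.log (y / x) ≤ y / x - 1 := Real.log_le_sub_one_of_pos hyx
    have hlog : Real.log (y / x) = Real.log y - Real.log x := Real.log_div (ne_of_gt hy) (ne_of_gt h)
    constructor
    · have := mul_le_mul_of_nonneg_left key (le_of_lt h)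
      rw [hlog] at this
      rw [mul_sub, mul_sub] at this
      rw [mul_div_cancel₀ _ (ne_of_gt h)] at this
      linarith
    · constructor
      · intro heq
        by_contra hne
        have hne' : y / x ≠ 1 := by
          intro h1
          exact hne ((div_eq_one_iff_eq (ne_of_gt h)).mp h1).symm
        have key' : Real.log (y / x) < y / x - 1 := Real.log_lt_sub_one_of_pos hyx hne'
        have := mul_lt_mul_of_pos_left key' h
        rw [hlog, mul_sub, mul_sub, mul_div_cancel₀ _ (ne_of_gt h)] at this
        linarith
      · intro heq; subst heq; ring

/-- Positivity of the geometric entropy. -/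
lemma geom_entropy_pos {l : ℝ} (hl : 0 < l) :
    0 < (1 + l) * Real.log (1 + l) - l * Real.log l := by
  have h1 : 0 < Real.log (1 + l) := Real.log_pos (by linarith)
  have h2 : Real.log l < Real.log (1 + l) := Real.log_lt_log hl (by linarith)
  nlinarith

/-- The geometric distribution maximizes Shannon entropy among all
probability distributions on ℕ with a given mean `l > 0`: for any pmf `p` with mean `l`,
`H(p) ≤ (1+l) log (1+l) - l log l`, with equality iff `p` is geometric with
parameter `l/(1+l)`, i.e. `p n = (1/(1+l)) * (l/(1+l))^n`. -/
theorem geometric_maximizes_entropy (l : ℝ) (hl : 0 < l)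
    (p : ℕ → ℝ) (hp0 : ∀ n, 0 ≤ p n) (hp1 : ∑' n : ℕ, p n = 1)
    (hmean : ∑' n : ℕ, (n : ℝ) * p n = l) :
    (-∑' n : ℕ, p n * Real.log (p n)) ≤ (1 + l) * Real.log (1 + l) - l * Real.log l ∧
    ((-∑' n : ℕ, p n * Real.log (p n)) = (1 + l) * Real.log (1 + l) - l * Real.log l ↔
      ∀ n, p n = (1 / (1 + l)) * (l / (1 + l)) ^ n) := by
  have h1l : (0:ℝ) < 1 + l := by linarith
  set c : ℝ := 1 / (1 + l) with hc_def
  set r : ℝ := l / (1 + l) with hr_def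
  have hc : 0 < c := by positivity
  have hr : 0 < r := by positivity
  have hr1 : r < 1 := by
    rw [hr_def, div_lt_one h1l]; linarith
  set q : ℕ → ℝ := fun n => c * r ^ n with hq_def
  have hq : ∀ n, 0 < q n := fun n => by positivity
  have hlogq : ∀ n, Real.log (q n) = Real.log c + (n : ℝ) * Real.log r := by
    intro n
    rw [hq_def]
    simp only
    rw [Real.log_mul (ne_of_gt hc) (by positivity), Real.log_pow]
  -- summability of p and of n * p n
  have hps : Summable p := by
    by_contra h
    rw [tsum_eq_zero_of_not_summable h] at hp1
    norm_num at hp1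
  have hnps : Summable (fun n : ℕ => (n : ℝ) * p n) := by
    by_contra h
    rw [tsum_eq_zero_of_not_summable h] at hmean
    exact absurd hmean.symm (ne_of_gt hl)
  -- summability of q and tsum q = 1
  have hqs : Summable q := (summable_geometric_of_lt_one (le_of_lt hr) hr1).mul_left c
  have hqsum : ∑' n, q n = 1 := by
    rw [hq_def, tsum_mul_left, tsum_geometric_of_lt_one (le_of_lt hr) hr1]
    rw [hc_def, hr_def]
    field_simp
    ring
  -- p n * log (q n) : summable with explicit value
  have hplq_eq : (fun n : ℕ => p n * Real.log (q n)) =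
      fun n => Real.log c * p n + Real.log r * ((n : ℝ) * p n) := by
    funext n; rw [hlogq n]; ring
  have hplqs : Summable (fun n : ℕ => p n * Real.log (q n)) := by
    rw [hplq_eq]
    exact (hps.mul_left _).add (hnps.mul_left _)
  have hplq : ∑' n, p n * Real.log (q n) = Real.log c + l * Real.log r := by
    rw [hplq_eq, Summable.tsum_add (hps.mul_left _) (hnps.mul_left _), tsum_mul_left, tsum_mul_left,
      hp1, hmean]
    ring
  -- RHS identity
  have hrhs : -(Real.log c + l * Real.log r) = (1 + l) * Real.log (1 + l) - l * Real.log l := by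
    rw [hc_def, hr_def, Real.log_div (ne_of_gt hl) (ne_of_gt h1l), one_div,
      Real.log_inv]
    ring
  by_cases hsum : Summable (fun n : ℕ => p n * Real.log (p n))
  · -- main case
    set D : ℕ → ℝ := fun n => (p n * Real.log (p n) - p n * Real.log (q n)) - (p n - q n)
      with hD_def
    have hDnn : ∀ n, 0 ≤ D n := fun n => by
      have := (gibbs_pt (hp0 n) (hq n)).1
      simp only [hD_def]; linarith
    have hDs : Summable D :=
      ((hsum.sub hplqs).sub (hps.sub hqs))
    have hDsum : ∑' n, D n =
        (∑' n, p n * Real.log (p n)) - (Real.log c + l * Real.log r) := by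
      rw [hD_def, Summable.tsum_sub (hsum.sub hplqs) (hps.sub hqs), Summable.tsum_sub hsum hplqs,
        Summable.tsum_sub hps hqs, hp1, hqsum, hplq]
      ring
    have hDge : 0 ≤ ∑' n, D n := tsum_nonneg hDnn
    constructor
    · rw [← hrhs]; linarith [hDsum ▸ hDge]
    · constructor
      · intro heq
        -- entropy equals bound, so tsum D = 0, so each D n = 0, so p n = q n
        have hS : (∑' n, p n * Real.log (p n)) = Real.log c + l * Real.log r := by
          rw [← hrhs] at heq; linarith
        have hD0 : ∑' n, D n = 0 := by rw [hDsum, hS]; ring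
        intro n
        have hle : D n ≤ 0 := by
          rw [← hD0]; exact Summable.le_tsum hDs n (fun i _ => hDnn i)
        have hDn : D n = 0 := le_antisymm hle (hDnn n)
        have : p n * Real.log (p n) - p n * Real.log (q n) = p n - q n := by
          simp only [hD_def] at hDn; linarith
        exact (gibbs_pt (hp0 n) (hq n)).2.mp this
      · intro hpq
        have hpq' : p = q := funext hpq
        have hS : (∑' n, p n * Real.log (p n)) = Real.log c + l * Real.log r := by
          rw [hpq', ← hplq, hpq']
        rw [hS, hrhs]
  · -- non-summable case: entropy = 0, bound > 0, and p cannot be geometric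
    have hS0 : (∑' n, p n * Real.log (p n)) = 0 := tsum_eq_zero_of_not_summable hsum
    have hpos := geom_entropy_pos hl
    constructor
    · rw [hS0]; linarith
    · constructor
      · intro heq; rw [hS0] at heq; linarith
      · intro hpq
        exfalso
        apply hsum
        have hpq' : p = q := funext hpq
        have : (fun n : ℕ => p n * Real.log (p n)) =
            fun n => p n * Real.log (q n) + (p n - q n) := by
          funext n; rw [hpq']; ring
        rw [this]
        exact hplqs.add (hps.sub hqs)
end

section
/- The entropy function of the Poisson distribution λ ↦ H(Poisson(λ)) is strictly increasing in λ on (0, ∞). -/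
open Real
lemma tsum_q (x : ℝ) : ∑' n : ℕ, x ^ n / (n.factorial : ℝ) = Real.exp x := by
  rw [Real.exp_eq_exp_ℝ, NormedSpace.exp_eq_tsum_div]

lemma log_factorial_le (n : ℕ) : Real.log n.factorial ≤ (n : ℝ)^2 := by
  calc Real.log n.factorial ≤ Real.log ((n:ℝ)^n) := by
        apply Real.log_le_log (by exact_mod_cast n.factorial_pos)
        exact_mod_cast Nat.factorial_le_pow n
    _ = n * Real.log n := by rw [Real.log_pow]
    _ ≤ (n:ℝ)^2 := by
        rcases Nat.eq_zero_or_pos n with h | h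
        · simp [h]
        · have : Real.log n ≤ (n:ℝ) := by
            have := Real.log_le_sub_one_of_pos (x := (n:ℝ)) (by exact_mod_cast h)
            linarith
          have hn : (0:ℝ) ≤ n := n.cast_nonneg
          nlinarith

lemma log_factorial_nonneg (n : ℕ) : 0 ≤ Real.log n.factorial :=
  Real.log_nonneg (by exact_mod_cast n.factorial_pos)

lemma summable_master {l : ℝ} (hl : 0 ≤ l) (c : ℕ → ℝ)
    (h1 : ∀ n, |c n| ≤ (n:ℝ)^3 + 1) :
    Summable (fun n : ℕ => c n * (l^n / n.factorial)) := by
  have hs : Summable (fun n : ℕ => 2 * ((8*l)^n / (n.factorial : ℝ))) :=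
    (Real.summable_pow_div_factorial (8*l)).mul_left 2
  apply Summable.of_norm_bounded hs
  intro n
  have hq : (0:ℝ) ≤ l^n / n.factorial := by positivity
  have h3 : ((n:ℝ))^3 + 1 ≤ 2 * (8:ℝ)^n := by
    have hn : (n:ℝ) ≤ 2^n := by exact_mod_cast (Nat.lt_two_pow_self (n := n)).le
    have h8 : ((2:ℝ)^n)^3 = 8^n := by
      rw [← pow_mul, mul_comm, pow_mul]; norm_num
    have : (n:ℝ)^3 ≤ 8^n := by
      calc (n:ℝ)^3 ≤ ((2:ℝ)^n)^3 := by
            apply pow_le_pow_left₀ n.cast_nonneg hn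
        _ = 8^n := h8
    have h1' : (1:ℝ) ≤ 8^n := one_le_pow₀ (by norm_num : (1:ℝ) ≤ 8)
    linarith
  calc ‖c n * (l^n / n.factorial)‖ = |c n| * (l^n / n.factorial) := by
        rw [norm_mul, Real.norm_eq_abs, Real.norm_eq_abs, abs_of_nonneg hq]
    _ ≤ ((n:ℝ)^3 + 1) * (l^n / n.factorial) := by
        apply mul_le_mul_of_nonneg_right (h1 n) hq
    _ ≤ (2 * 8^n) * (l^n / n.factorial) := mul_le_mul_of_nonneg_right h3 hq
    _ = 2 * ((8*l)^n / n.factorial) := by rw [mul_pow]; ring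

lemma cast_le_cube (n : ℕ) : (n:ℝ) ≤ (n:ℝ)^3 + 1 := by
  rcases Nat.eq_zero_or_pos n with h | h
  · simp [h]
  · have h1 : (1:ℝ) ≤ n := by exact_mod_cast h
    nlinarith [sq_nonneg ((n:ℝ) - 1), sq_nonneg (n:ℝ)]

lemma sq_le_cube (n : ℕ) : (n:ℝ)^2 ≤ (n:ℝ)^3 + 1 := by
  rcases Nat.eq_zero_or_pos n with h | h
  · simp [h]
  · have h1 : (1:ℝ) ≤ n := by exact_mod_cast h
    nlinarith

lemma summable_n_q {x : ℝ} (hx : 0 ≤ x) :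
    Summable (fun n : ℕ => (n:ℝ) * (x^n / n.factorial)) := by
  apply summable_master hx
  intro n
  rw [abs_of_nonneg n.cast_nonneg]
  exact cast_le_cube n

lemma succ_term (x : ℝ) (n : ℕ) :
    (((n+1 : ℕ)):ℝ) * (x^(n+1) / ((n+1).factorial : ℝ)) = x * (x^n / n.factorial) := by
  have hf : ((n.factorial : ℝ)) ≠ 0 := by exact_mod_cast n.factorial_pos.ne'
  have hn1 : ((n:ℝ)+1) ≠ 0 := by positivity
  rw [Nat.factorial_succ]
  push_cast
  field_simp
  ring

lemma tsum_n_q {x : ℝ} (hx : 0 ≤ x) :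
    ∑' n : ℕ, (n:ℝ) * (x^n / n.factorial) = x * Real.exp x := by
  rw [Summable.tsum_eq_zero_add (summable_n_q hx)]
  simp only [Nat.cast_zero, zero_mul, zero_add]
  calc ∑' n : ℕ, (((n+1:ℕ)):ℝ) * (x^(n+1) / ((n+1).factorial : ℝ))
      = ∑' n : ℕ, x * (x^n / n.factorial) := by
        exact tsum_congr (fun n => succ_term x n)
    _ = x * Real.exp x := by rw [tsum_mul_left, tsum_q]

noncomputable def Spois (x : ℝ) : ℝ := ∑' n : ℕ, Real.log n.factorial * (x^n / n.factorial)

lemma summable_S {x : ℝ} (hx : 0 ≤ x) :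
    Summable (fun n : ℕ => Real.log n.factorial * (x^n / n.factorial)) := by
  apply summable_master hx
  intro n
  rw [abs_of_nonneg (log_factorial_nonneg n)]
  exact (log_factorial_le n).trans (sq_le_cube n)

lemma deriv_bound {R : ℝ} (hR : 1 ≤ R) {y : ℝ} (hy : |y| ≤ R) (n : ℕ) :
    ‖Real.log n.factorial * (((n:ℝ) * y^(n-1)) / n.factorial)‖ ≤ (n:ℝ)^3 * (R^n / n.factorial) := by
  have hR0 : (0:ℝ) ≤ R := le_trans zero_le_one hR
  have h1 : |y^(n-1)| ≤ R^n := by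
    rw [abs_pow]
    calc |y|^(n-1) ≤ R^(n-1) := pow_le_pow_left₀ (abs_nonneg y) hy _
      _ ≤ R^n := pow_le_pow_right₀ hR (Nat.sub_le n 1)
  have hf : (0:ℝ) < n.factorial := by exact_mod_cast n.factorial_pos
  rw [Real.norm_eq_abs, abs_mul, abs_div, abs_mul, abs_of_nonneg (log_factorial_nonneg n),
    Nat.abs_cast, abs_of_pos hf]
  calc Real.log n.factorial * ((n:ℝ) * |y^(n-1)| / n.factorial)
      ≤ (n:ℝ)^2 * ((n:ℝ) * R^n / n.factorial) := by
        have e1 : Real.log n.factorial ≤ (n:ℝ)^2 := log_factorial_le n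
        have e2 : (n:ℝ) * |y^(n-1)| / n.factorial ≤ (n:ℝ) * R^n / n.factorial := by
          gcongr
        apply mul_le_mul e1 e2 ?_ (by positivity)
        positivity
    _ = (n:ℝ)^3 * (R^n / n.factorial) := by ring
lemma summable_deriv_bound {R : ℝ} (hR : 0 ≤ R) :
    Summable (fun n : ℕ => (n:ℝ)^3 * (R^n / n.factorial)) := by
  apply summable_master hR
  intro n
  rw [abs_of_nonneg (pow_nonneg n.cast_nonneg 3)]
  linarith

lemma hasDerivAt_S {x : ℝ} (hx : 0 < x) :
    HasDerivAt Spois (∑' n : ℕ, Real.log n.factorial * (((n:ℝ) * x^(n-1)) / n.factorial)) x := by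
  set R := x + 1 with hR
  have hR1 : 1 ≤ R := by simp [hR]; linarith
  have hRpos : (0:ℝ) ≤ R := by linarith
  apply hasDerivAt_tsum_of_isPreconnected (summable_deriv_bound hRpos)
    (isOpen_Ioo (a := -R) (b := R)) (convex_Ioo _ _).isPreconnected
    (g := fun (n : ℕ) (y : ℝ) => Real.log n.factorial * (y^n / n.factorial))
    (g' := fun (n : ℕ) (y : ℝ) => Real.log n.factorial * (((n:ℝ) * y^(n-1)) / n.factorial))
    (y₀ := x)
  · intro n y _
    exact ((hasDerivAt_pow n y).div_const _).const_mul _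
  · intro n y hy
    apply deriv_bound hR1
    rw [abs_le]
    exact ⟨(le_of_lt hy.1), le_of_lt hy.2⟩
  · constructor <;> [linarith; linarith]
  · exact summable_S hx.le
  · constructor <;> [linarith; linarith]

lemma summable_log_succ {x : ℝ} (hx : 0 ≤ x) :
    Summable (fun n : ℕ => Real.log ((n:ℝ)+1) * (x^n / n.factorial)) := by
  apply summable_master hx
  intro n
  have h1 : (0:ℝ) < (n:ℝ)+1 := by positivity
  rw [abs_of_nonneg (Real.log_nonneg (by linarith))]
  have := Real.log_le_sub_one_of_pos h1
  calc Real.log ((n:ℝ)+1) ≤ (n:ℝ)+1-1 := this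
    _ ≤ (n:ℝ)^3 + 1 := by linarith [cast_le_cube n]

lemma D_eq {x : ℝ} (hx : 0 < x) :
    ∑' n : ℕ, Real.log n.factorial * (((n:ℝ) * x^(n-1)) / n.factorial)
      = Spois x + ∑' n : ℕ, Real.log ((n:ℝ)+1) * (x^n / n.factorial) := by
  have hsum : Summable (fun n : ℕ => Real.log n.factorial * (((n:ℝ) * x^(n-1)) / n.factorial)) := by
    apply Summable.of_norm_bounded (summable_deriv_bound (R := x+1) (by linarith))
    intro n
    exact deriv_bound (by linarith) (by rw [abs_of_pos hx]; linarith) n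
  rw [Summable.tsum_eq_zero_add hsum]
  simp only [Nat.factorial_zero, Nat.cast_zero, zero_mul, zero_div, mul_zero, zero_add,
    Nat.cast_one]
  calc ∑' n : ℕ, Real.log (n+1).factorial * ((((n+1:ℕ):ℝ) * x^((n+1)-1)) / (n+1).factorial)
      = ∑' n : ℕ, (Real.log n.factorial * (x^n / n.factorial)
          + Real.log ((n:ℝ)+1) * (x^n / n.factorial)) := by
        apply tsum_congr
        intro n
        have hf : ((n.factorial:ℝ)) ≠ 0 := by exact_mod_cast n.factorial_pos.ne'
        have hn1 : ((n:ℝ)+1) ≠ 0 := by positivity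
        have hfs : (((n+1).factorial : ℝ)) = ((n:ℝ)+1) * n.factorial := by
          rw [Nat.factorial_succ]; push_cast; ring
        have e2 : Real.log ((n+1).factorial) = Real.log ((n:ℝ)+1) + Real.log n.factorial := by
          rw [hfs, Real.log_mul hn1 hf]
        have e1 : (((n+1:ℕ):ℝ) * x^((n+1)-1)) / ((n+1).factorial : ℝ) = x^n / n.factorial := by
          rw [Nat.add_sub_cancel, hfs]
          push_cast
          rw [mul_div_mul_left _ _ hn1]
        rw [e1, e2]
        ring
    _ = Spois x + ∑' n : ℕ, Real.log ((n:ℝ)+1) * (x^n / n.factorial) := by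
        rw [Summable.tsum_add (summable_S hx.le) (summable_log_succ hx.le)]
        rfl

lemma summable_nlogn {x : ℝ} (hx : 0 ≤ x) :
    Summable (fun n : ℕ => (n:ℝ) * Real.log n * (x^n / n.factorial)) := by
  apply summable_master hx
  intro n
  rcases Nat.eq_zero_or_pos n with h | h
  · simp [h]
  · have h1 : (1:ℝ) ≤ (n:ℝ) := by exact_mod_cast h
    have hlog0 : 0 ≤ Real.log n := Real.log_nonneg h1
    have hlog : Real.log n ≤ (n:ℝ) := by
      have := Real.log_le_sub_one_of_pos (x := (n:ℝ)) (by linarith)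
      linarith
    rw [abs_of_nonneg (mul_nonneg n.cast_nonneg hlog0)]
    calc (n:ℝ) * Real.log n ≤ (n:ℝ) * (n:ℝ) := by
          exact mul_le_mul_of_nonneg_left hlog n.cast_nonneg
      _ ≤ (n:ℝ)^3 + 1 := by nlinarith [sq_le_cube n]

lemma U_eq_xT {x : ℝ} (hx : 0 ≤ x) :
    ∑' n : ℕ, (n:ℝ) * Real.log n * (x^n / n.factorial)
      = x * ∑' n : ℕ, Real.log ((n:ℝ)+1) * (x^n / n.factorial) := by
  rw [Summable.tsum_eq_zero_add (summable_nlogn hx)]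
  simp only [Nat.cast_zero, zero_mul, zero_add]
  rw [← tsum_mul_left]
  apply tsum_congr
  intro n
  have hf : ((n.factorial:ℝ)) ≠ 0 := by exact_mod_cast n.factorial_pos.ne'
  have hn1 : ((n:ℝ)+1) ≠ 0 := by positivity
  have hfs : (((n+1).factorial : ℝ)) = ((n:ℝ)+1) * n.factorial := by
    rw [Nat.factorial_succ]; push_cast; ring
  push_cast
  rw [hfs]
  field_simp
  ring

lemma key_ineq {x : ℝ} (hx : 0 < x) :
    Real.log x * Real.exp x < ∑' n : ℕ, Real.log ((n:ℝ)+1) * (x^n / n.factorial) := by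
  have hU : (∑' n : ℕ, ((Real.log x + 1) * (n:ℝ) - x) * (x^n / n.factorial))
      < ∑' n : ℕ, (n:ℝ) * Real.log n * (x^n / n.factorial) := by
    have hsf : Summable (fun n : ℕ => ((Real.log x + 1) * (n:ℝ) - x) * (x^n / n.factorial)) := by
      apply Summable.congr
        (f := fun n : ℕ => (Real.log x + 1) * ((n:ℝ) * (x^n / n.factorial))
          - x * (x^n / n.factorial))
        (((summable_n_q hx.le).mul_left _).sub
          ((Real.summable_pow_div_factorial x).mul_left x))
      intro n; ring
    apply Summable.tsum_lt_tsum (i := 0) ?_ ?_ hsf (summable_nlogn hx.le)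
    · intro n
      rcases Nat.eq_zero_or_pos n with h | h
      · simp [h]
        positivity
      · have hn : (0:ℝ) < (n:ℝ) := by exact_mod_cast h
        have hq : (0:ℝ) ≤ x^n / n.factorial := by positivity
        apply mul_le_mul_of_nonneg_right ?_ hq
        have hlog := Real.log_le_sub_one_of_pos (x := x / n) (by positivity)
        rw [Real.log_div hx.ne' hn.ne'] at hlog
        have : (n:ℝ) * (Real.log x - Real.log n) ≤ (n:ℝ) * (x / n - 1) :=
          mul_le_mul_of_nonneg_left hlog hn.le
        have hcan : (n:ℝ) * (x / n) = x := by field_simp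
        nlinarith
    · simp
      positivity
  have hUval : (∑' n : ℕ, ((Real.log x + 1) * (n:ℝ) - x) * (x^n / n.factorial))
      = x * Real.log x * Real.exp x := by
    calc (∑' n : ℕ, ((Real.log x + 1) * (n:ℝ) - x) * (x^n / n.factorial))
        = ∑' n : ℕ, ((Real.log x + 1) * ((n:ℝ) * (x^n / n.factorial))
            - x * (x^n / n.factorial)) := tsum_congr (fun n => by ring)
      _ = (Real.log x + 1) * (x * Real.exp x) - x * Real.exp x := by
          rw [Summable.tsum_sub (((summable_n_q hx.le).mul_left _))
            ((Real.summable_pow_div_factorial x).mul_left x), tsum_mul_left, tsum_mul_left,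
            tsum_n_q hx.le, tsum_q]
      _ = x * Real.log x * Real.exp x := by ring
  rw [hUval, U_eq_xT hx.le] at hU
  exact (mul_lt_mul_iff_right₀ hx).mp (by linarith)

noncomputable def Gpois (l : ℝ) : ℝ := l - l * Real.log l + Real.exp (-l) * Spois l

lemma hasDerivAt_G {x : ℝ} (hx : 0 < x) :
    HasDerivAt Gpois
      (-Real.log x + Real.exp (-x) * ∑' n : ℕ, Real.log ((n:ℝ)+1) * (x^n / n.factorial)) x := by
  have h2 : HasDerivAt (fun l : ℝ => l * Real.log l) (Real.log x + 1) x :=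
    Real.hasDerivAt_mul_log hx.ne'
  have h3 : HasDerivAt (fun l : ℝ => Real.exp (-l)) (-Real.exp (-x)) x := by
    have := (Real.hasDerivAt_exp (-x)).comp x (hasDerivAt_neg x)
    simpa [Function.comp_def] using this
  have h4 := hasDerivAt_S hx
  have h5 := ((hasDerivAt_id x).sub h2).add (h3.mul h4)
  have h6 : HasDerivAt Gpois
      (1 - (Real.log x + 1) + (-Real.exp (-x) * Spois x
        + Real.exp (-x) * ∑' n : ℕ, Real.log n.factorial * (((n:ℝ) * x^(n-1)) / n.factorial)))
      x := h5
  convert h6 using 1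
  rw [D_eq hx]
  ring

lemma G_mono : StrictMonoOn Gpois (Set.Ioi (0:ℝ)) := by
  apply strictMonoOn_of_deriv_pos (convex_Ioi 0)
  · intro x hx
    exact (hasDerivAt_G (Set.mem_Ioi.mp hx)).continuousAt.continuousWithinAt
  · rw [interior_Ioi]
    intro x hx
    have hx' : 0 < x := Set.mem_Ioi.mp hx
    rw [(hasDerivAt_G hx').deriv]
    have hk := key_ineq hx'
    have hE : 0 < Real.exp (-x) := Real.exp_pos _
    have h1 : Real.exp (-x) * (Real.log x * Real.exp x)
        < Real.exp (-x) * ∑' n : ℕ, Real.log ((n:ℝ)+1) * (x^n / n.factorial) :=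
      (mul_lt_mul_iff_right₀ hE).mpr hk
    have h2 : Real.exp (-x) * Real.exp x = 1 := by
      rw [← Real.exp_add]; simp
    have h3 : Real.exp (-x) * (Real.log x * Real.exp x) = Real.log x := by
      rw [mul_comm (Real.log x), ← mul_assoc, h2, one_mul]
    linarith

lemma H_eq {l : ℝ} (hl : 0 < l) :
    -∑' n : ℕ, (Real.exp (-l) * l ^ n / n.factorial) *
        Real.log (Real.exp (-l) * l ^ n / n.factorial) = Gpois l := by
  set E := Real.exp (-l) with hE
  have hEpos : 0 < E := Real.exp_pos _
  have hterm : ∀ n : ℕ, (E * l ^ n / n.factorial) * Real.log (E * l ^ n / n.factorial)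
      = (-l) * (E * (l^n / n.factorial)) + Real.log l * ((n:ℝ) * (E * (l^n / n.factorial)))
        - E * (Real.log n.factorial * (l^n / n.factorial)) := by
    intro n
    have hf : (0:ℝ) < n.factorial := by exact_mod_cast n.factorial_pos
    have hln : (0:ℝ) < l^n := pow_pos hl n
    have hlog : Real.log (E * l ^ n / n.factorial)
        = -l + (n:ℝ) * Real.log l - Real.log n.factorial := by
      rw [Real.log_div (by positivity) hf.ne', Real.log_mul hEpos.ne' hln.ne', hE,
        Real.log_exp, Real.log_pow]
    rw [hlog]
    ring
  rw [tsum_congr hterm]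
  have sA : Summable (fun n : ℕ => E * (l^n / n.factorial)) :=
    (Real.summable_pow_div_factorial l).mul_left E
  have sB : Summable (fun n : ℕ => (n:ℝ) * (E * (l^n / n.factorial))) := by
    apply Summable.congr ((summable_n_q hl.le).mul_left E)
    intro n; ring
  have sC : Summable (fun n : ℕ => E * (Real.log n.factorial * (l^n / n.factorial))) :=
    (summable_S hl.le).mul_left E
  have hA : ∑' n : ℕ, E * (l^n / n.factorial) = 1 := by
    rw [tsum_mul_left, tsum_q, hE, ← Real.exp_add]
    simp
  have hB : ∑' n : ℕ, (n:ℝ) * (E * (l^n / n.factorial)) = l := by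
    calc ∑' n : ℕ, (n:ℝ) * (E * (l^n / n.factorial))
        = ∑' n : ℕ, E * ((n:ℝ) * (l^n / n.factorial)) := tsum_congr (fun n => by ring)
      _ = E * (l * Real.exp l) := by rw [tsum_mul_left, tsum_n_q hl.le]
      _ = (E * Real.exp l) * l := by ring
      _ = l := by rw [hE, ← Real.exp_add]; simp
  have hC : ∑' n : ℕ, E * (Real.log n.factorial * (l^n / n.factorial)) = E * Spois l := by
    rw [tsum_mul_left]; rfl
  rw [Summable.tsum_sub ((sA.mul_left (-l)).add (sB.mul_left (Real.log l))) sC,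
    Summable.tsum_add (sA.mul_left (-l)) (sB.mul_left (Real.log l)), tsum_mul_left (a := -l),
    tsum_mul_left (a := Real.log l), hA, hB, hC, Gpois]
  ring

/-- The entropy function of the Poisson distribution
`l ↦ H(Poisson(l)) = -∑_n (e^{-l} l^n / n!) log (e^{-l} l^n / n!)`
is strictly increasing in `l` on `(0, ∞)`. -/
theorem poisson_entropy_strictMono :
    StrictMonoOn
      (fun l : ℝ => -∑' n : ℕ,
        (Real.exp (-l) * l ^ n / n.factorial) *
          Real.log (Real.exp (-l) * l ^ n / n.factorial))
      (Set.Ioi (0 : ℝ)) := by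
  intro a ha b hb hab
  have ea := H_eq (Set.mem_Ioi.mp ha)
  have eb := H_eq (Set.mem_Ioi.mp hb)
  simp only []
  rw [ea, eb]
  exact G_mono ha hb hab
end

section
/- The transform T from discrete pmfs on ℕ to circularly-symmetric densities on ℂ, given by p_{X_c}(r) = (1/π) ∑_{n=0}^∞ p_X[n] e^{−|r|²} |r|^{2n} / n!, maps any pmf to a valid probability density on ℂ (nonnegative, integrating to 1), and is injective. -/
open MeasureTheory

/-- The transform `T` from pmfs on ℕ to circularly-symmetric densities on ℂ:
`T(p)(r) = (1/π) ∑_n p[n] e^{-|r|²} |r|^{2n} / n!`. -/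
noncomputable def numberToHusimi (p : ℕ → ℝ) (r : ℂ) : ℝ :=
  (1 / Real.pi) * ∑' n : ℕ,
    p n * (Real.exp (-(‖r‖ ^ 2)) * ‖r‖ ^ (2 * n) / n.factorial)

open Real
open scoped NNReal ENNReal

lemma aux_pow_le_exp {x : ℝ} (hx : 0 ≤ x) (n : ℕ) : x ^ n / n.factorial ≤ Real.exp x := by
  calc x ^ n / n.factorial ≤ ∑ i ∈ Finset.range (n+1), x ^ i / i.factorial :=
        Finset.single_le_sum (f := fun i => x ^ i / (i.factorial : ℝ))
          (fun i _ => by positivity) (Finset.self_mem_range_succ n)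
    _ ≤ Real.exp x := Real.sum_le_exp_of_nonneg hx _

lemma aux_gauss : Integrable (fun r : ℂ => Real.exp (-(1/2) * ‖r‖ ^ 2)) := by
  have h := GaussianFourier.integrable_cexp_neg_mul_sq_norm_add (V := ℂ) (b := (1/2:ℂ)) (by norm_num) 0 0
  refine h.norm.congr (Filter.Eventually.of_forall fun v => ?_)
  simp [Complex.norm_exp]
  norm_cast

lemma aux_integrable (n : ℕ) :
    Integrable (fun r : ℂ => ‖r‖ ^ (2*n) * Real.exp (-(‖r‖ ^ 2))) := by
  refine ((aux_gauss.const_mul ((2:ℝ)^n * n.factorial)).mono' ?_ ?_)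
  · exact (Continuous.mul (by continuity) (by continuity)).aestronglyMeasurable
  · refine Filter.Eventually.of_forall fun r => ?_
    set t := ‖r‖ with ht
    have ht0 : 0 ≤ t := norm_nonneg r
    have h1 : (t^2/2) ^ n / n.factorial ≤ Real.exp (t^2/2) := aux_pow_le_exp (by positivity) n
    have h2 : t ^ (2*n) ≤ 2^n * n.factorial * Real.exp (t^2/2) := by
      have he : t ^ (2*n) = (t^2/2)^n * 2^n := by
        rw [pow_mul, div_pow, div_mul_cancel₀]
        positivity
      rw [he]
      have h1' : (t^2/2) ^ n ≤ n.factorial * Real.exp (t^2/2) := by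
        rw [div_le_iff₀ (by positivity)] at h1
        linarith [h1]
      calc (t^2/2)^n * 2^n ≤ (n.factorial * Real.exp (t^2/2)) * 2^n :=
            mul_le_mul_of_nonneg_right h1' (by positivity)
        _ = 2^n * n.factorial * Real.exp (t^2/2) := by ring
    rw [Real.norm_of_nonneg (by positivity)]
    calc t ^ (2*n) * Real.exp (-(t^2))
        ≤ (2^n * n.factorial * Real.exp (t^2/2)) * Real.exp (-(t^2)) :=
          mul_le_mul_of_nonneg_right h2 (Real.exp_nonneg _)
      _ = 2^n * n.factorial * Real.exp (-(1/2) * ‖r‖^2) := by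
          rw [mul_assoc, ← Real.exp_add]
          rw [← ht]
          ring_nf

lemma aux_integral (n : ℕ) :
    ∫ r : ℂ, ‖r‖ ^ (2*n) * Real.exp (-(‖r‖ ^ 2)) = Real.pi * n.factorial := by
  have h := Complex.integral_rpow_mul_exp_neg_rpow (p := 2) (q := (2*n:ℕ)) one_le_two
    (by push_cast; linarith [Nat.cast_nonneg (α := ℝ) n])
  rw [show ((2*n : ℕ) : ℝ) + 2 = 2 * ((n:ℝ)+1) by push_cast; ring] at h
  rw [show (∫ x : ℂ, ‖x‖ ^ ((2*n : ℕ):ℝ) * rexp (-‖x‖ ^ (2:ℝ))) =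
      ∫ x : ℂ, ‖x‖ ^ (2*n) * rexp (-(‖x‖ ^ 2)) from ?_] at h
  · rw [h, mul_div_assoc, mul_div_cancel_left₀ _ two_ne_zero, Real.Gamma_nat_eq_factorial]; ring
  · congr 1 with x
    rw [Real.rpow_natCast, show (2:ℝ) = ((2:ℕ):ℝ) by norm_num, Real.rpow_natCast]


lemma aux_part2 (p : ℕ → ℝ) (hp0 : ∀ n, 0 ≤ p n) (hp1 : ∑' n : ℕ, p n = 1) (hps : Summable p) :
    ∫ r : ℂ, numberToHusimi p r = 1 := by
  set F : ℕ → ℂ → ℝ := fun n r =>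
    p n * (Real.exp (-(‖r‖ ^ 2)) * ‖r‖ ^ (2 * n) / n.factorial) with hF
  have hFeq : ∀ n, F n = fun r =>
      (p n / n.factorial) * (‖r‖ ^ (2*n) * Real.exp (-(‖r‖ ^ 2))) := by
    intro n; funext r; rw [hF]; ring
  have hFint : ∀ n, Integrable (F n) := fun n => by
    rw [hFeq n]; exact (aux_integrable n).const_mul _
  have hFval : ∀ n, ∫ r : ℂ, F n r = Real.pi * p n := by
    intro n
    rw [hFeq n, integral_const_mul, aux_integral n]
    have : (n.factorial : ℝ) ≠ 0 := by exact_mod_cast n.factorial_ne_zero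
    field_simp
  have hFnonneg : ∀ n r, 0 ≤ F n r := fun n r => by
    rw [hF]
    have := hp0 n; positivity
  have hsum : Summable fun n => ∫ r : ℂ, ‖F n r‖ := by
    have : (fun n => ∫ r : ℂ, ‖F n r‖) = fun n => Real.pi * p n := by
      funext n
      rw [← hFval n]
      congr 1 with r
      rw [Real.norm_of_nonneg (hFnonneg n r)]
    rw [this]
    exact hps.mul_left _
  have hswap := integral_tsum_of_summable_integral_norm hFint hsum
  have : ∫ r : ℂ, numberToHusimi p r = (1 / Real.pi) * ∫ r : ℂ, ∑' n, F n r := by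
    rw [← integral_const_mul]
    rfl
  rw [this, ← hswap]
  have : ∑' n, ∫ r : ℂ, F n r = Real.pi := by
    simp_rw [hFval]
    rw [tsum_mul_left, hp1, mul_one]
  rw [this]
  field_simp


lemma aux_key (p q : ℕ → ℝ)
    (h : numberToHusimi p = numberToHusimi q) (s : ℝ) (hs : 0 ≤ s) :
    ∑' n : ℕ, p n * s ^ n / n.factorial = ∑' n : ℕ, q n * s ^ n / n.factorial := by
  have h1 := congrFun h (Real.sqrt s : ℂ)
  unfold numberToHusimi at h1
  have habs : ‖(Real.sqrt s : ℂ)‖ = Real.sqrt s := by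
    rw [Complex.norm_of_nonneg (Real.sqrt_nonneg s)]
  rw [habs] at h1
  have hsq : Real.sqrt s ^ 2 = s := Real.sq_sqrt hs
  have hpow : ∀ n : ℕ, Real.sqrt s ^ (2 * n) = s ^ n := fun n => by
    rw [pow_mul, hsq]
  simp only [hsq, hpow] at h1
  have h2 : ∀ (f : ℕ → ℝ), (fun n => f n * (Real.exp (-s) * s ^ n / n.factorial))
      = fun n => Real.exp (-s) * (f n * s ^ n / n.factorial) := by
    intro f; funext n; ring
  rw [h2 p, h2 q, tsum_mul_left, tsum_mul_left] at h1
  have hpi : (1 / Real.pi) ≠ 0 := one_div_ne_zero Real.pi_ne_zero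
  have h3 := mul_left_cancel₀ hpi h1
  exact mul_left_cancel₀ (Real.exp_ne_zero _) h3

lemma aux_inj (p q : ℕ → ℝ) (hp0 : ∀ n, 0 ≤ p n) (hp1 : ∑' n : ℕ, p n = 1)
    (hq0 : ∀ n, 0 ≤ q n) (hq1 : ∑' n : ℕ, q n = 1)
    (key : ∀ s : ℝ, 0 ≤ s → ∑' n : ℕ, p n * s ^ n / n.factorial
      = ∑' n : ℕ, q n * s ^ n / n.factorial) : p = q := by
  have hps : Summable p := by
    by_contra hs
    rw [tsum_eq_zero_of_not_summable hs] at hp1; norm_num at hp1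
  have hqs : Summable q := by
    by_contra hs
    rw [tsum_eq_zero_of_not_summable hs] at hq1; norm_num at hq1
  have hple : ∀ n, p n ≤ 1 := fun n => hp1 ▸ Summable.le_tsum hps n (fun j _ => hp0 j)
  have hqle : ∀ n, q n ≤ 1 := fun n => hq1 ▸ Summable.le_tsum hqs n (fun j _ => hq0 j)
  set c : FormalMultilinearSeries ℝ ℝ ℝ :=
    FormalMultilinearSeries.ofScalars ℝ (fun n => (p n - q n) / n.factorial) with hc
  have hrad : 1 ≤ c.radius := by
    apply c.le_radius_of_bound 2 (r := 1)
    intro n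
    rw [FormalMultilinearSeries.ofScalars_norm]
    simp only [NNReal.coe_one, one_pow, mul_one]
    rw [Real.norm_eq_abs, abs_div, Nat.abs_cast]
    have : |p n - q n| ≤ 2 := by
      rw [abs_le]; constructor <;> nlinarith [hp0 n, hq0 n, hple n, hqle n]
    have hfac : (1:ℝ) ≤ n.factorial := by exact_mod_cast Nat.one_le_iff_ne_zero.mpr n.factorial_ne_zero
    calc |p n - q n| / n.factorial ≤ |p n - q n| / 1 := by
          apply div_le_div_of_nonneg_left (abs_nonneg _) one_pos hfac
      _ ≤ 2 := by simpa using this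
  have hball : HasFPowerSeriesOnBall c.sum c 0 1 :=
    (c.hasFPowerSeriesOnBall (lt_of_lt_of_le one_pos hrad)).mono one_pos hrad
  have hsum : ∀ s : ℝ, 0 ≤ s → c.sum s = 0 := by
    intro s hs
    have hsp : Summable (fun n => p n * s ^ n / n.factorial) := by
      apply Summable.of_nonneg_of_le
        (fun n => div_nonneg (mul_nonneg (hp0 n) (pow_nonneg hs n)) (Nat.cast_nonneg _))
        (fun n => ?_) (Real.summable_pow_div_factorial s)
      have h' : p n * s ^ n ≤ 1 * s ^ n :=
        mul_le_mul_of_nonneg_right (hple n) (pow_nonneg hs n)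
      rw [one_mul] at h'
      have hfac : (0:ℝ) < n.factorial := by exact_mod_cast n.factorial_pos
      gcongr
    have hsq : Summable (fun n => q n * s ^ n / n.factorial) := by
      apply Summable.of_nonneg_of_le
        (fun n => div_nonneg (mul_nonneg (hq0 n) (pow_nonneg hs n)) (Nat.cast_nonneg _))
        (fun n => ?_) (Real.summable_pow_div_factorial s)
      have h' : q n * s ^ n ≤ 1 * s ^ n :=
        mul_le_mul_of_nonneg_right (hqle n) (pow_nonneg hs n)
      rw [one_mul] at h'
      have hfac : (0:ℝ) < n.factorial := by exact_mod_cast n.factorial_pos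
      gcongr
    have : c.sum s = ∑' n : ℕ, (p n * s ^ n / n.factorial - q n * s ^ n / n.factorial) := by
      rw [FormalMultilinearSeries.sum]
      congr 1 with n
      rw [hc, FormalMultilinearSeries.ofScalars_apply_eq]
      rw [smul_eq_mul]
      ring
    rw [this, Summable.tsum_sub hsp hsq, key s hs, sub_self]
  have hUeq : Metric.eball (0:ℝ) 1 = Metric.ball (0:ℝ) 1 := by
    rw [show (1:ℝ≥0∞) = ENNReal.ofReal 1 by simp, Metric.emetric_ball]
  have hzero : Set.EqOn c.sum 0 (Metric.eball (0:ℝ) 1) := by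
    apply AnalyticOnNhd.eqOn_zero_of_preconnected_of_eventuallyEq_zero
      (hball.analyticOnNhd) ?_ (z₀ := (1/2 : ℝ)) ?_ ?_
    · rw [hUeq]; exact (convex_ball (0:ℝ) 1).isPreconnected
    · rw [hUeq]; simp [Metric.mem_ball]; norm_num
    · filter_upwards [Ioi_mem_nhds (by norm_num : (0:ℝ) < 1/2)] with x hx
      exact hsum x (le_of_lt hx)
  have hev0 : c.sum =ᶠ[nhds (0:ℝ)] 0 := by
    refine Filter.eventuallyEq_of_mem ?_ hzero
    rw [hUeq]
    exact Metric.ball_mem_nhds 0 one_pos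
  have hc0 : c = 0 := hball.hasFPowerSeriesAt.eq_zero_of_eventually hev0
  have := (FormalMultilinearSeries.ofScalars_series_eq_zero (𝕜 := ℝ) (E := ℝ)
    (c := fun n => (p n - q n) / n.factorial)).mp hc0
  funext n
  have h0 : (p n - q n) / (n.factorial : ℝ) = 0 := congrFun this n
  have hfac : (n.factorial : ℝ) ≠ 0 := by exact_mod_cast n.factorial_ne_zero
  field_simp at h0
  linarith


/-- The transform `T` maps any pmf on ℕ to a valid probability
density on ℂ (nonnegative and integrating to 1 w.r.t. Lebesgue measure on
ℂ ≅ ℝ²), and is injective on pmfs. -/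
theorem numberToHusimi_isDensity_and_injective
    (p : ℕ → ℝ) (hp0 : ∀ n, 0 ≤ p n) (hp1 : ∑' n : ℕ, p n = 1) :
    (∀ r : ℂ, 0 ≤ numberToHusimi p r) ∧
    (∫ r : ℂ, numberToHusimi p r = 1) ∧
    (∀ q : ℕ → ℝ, (∀ n, 0 ≤ q n) → (∑' n : ℕ, q n = 1) →
      numberToHusimi p = numberToHusimi q → p = q) := by
  have hps : Summable p := by
    by_contra hs
    rw [tsum_eq_zero_of_not_summable hs] at hp1; norm_num at hp1
  refine ⟨?_, aux_part2 p hp0 hp1 hps, ?_⟩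
  · intro r
    unfold numberToHusimi
    have h1 : 0 ≤ ∑' n : ℕ,
        p n * (Real.exp (-(‖r‖ ^ 2)) * ‖r‖ ^ (2 * n) / n.factorial) := by
      apply tsum_nonneg
      intro n
      have := hp0 n
      positivity
    have h2 : 0 ≤ 1 / Real.pi := by positivity
    exact mul_nonneg h2 h1
  · intro q hq0 hq1 h
    exact aux_inj p q hp0 hp1 hq0 hq1 (fun s hs => aux_key p q h s hs)
end
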